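/- Suppose ω is a simple random walk path on Z^2 whose support (set of visited sites) contains M disjoint occurrences of the pattern Q, where Q has visited sites {(0,0), (−1,0)} and unvisited sites {(1,0), (0,−1), (0,1), (−1,1)} (all relative to the center). Then deg C(ω) ≥ 2^M: there are at least 2^M distinct walks with the same contact matrix as ω. -/

import Mathlib

open Finset

/-- The unit step of a simple walk on `ℤ^n` given a direction `d`. -/
def stepVec (n : ℕ) (d : Fin n × Bool) : Fin n → ℤ :=
  fun j => if j = d.1 then (if d.2 then 1 else -1) else 0

/-- Position after `i` steps of the walk encoded by the step sequence `s`. -/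
def pos {n N : ℕ} (s : Fin N → Fin n × Bool) (i : ℕ) : Fin n → ℤ :=
  ∑ k ∈ Finset.univ.filter (fun k : Fin N => (k : ℕ) < i), stepVec n (s k)

/-- Contact matrix: `1` iff positions at distinct times agree. -/
def cm {n N : ℕ} (s : Fin N → Fin n × Bool) : Fin (N + 1) → Fin (N + 1) → Bool :=
  fun i j => decide ((i : ℕ) ≠ (j : ℕ) ∧ pos s i = pos s j)

/-- Degeneracy: number of walks of length `N` sharing the contact matrix of `s`. -/
def degC {n N : ℕ} (s : Fin N → Fin n × Bool) : ℕ :=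
  (Finset.univ.filter (fun s' : Fin N → Fin n × Bool => cm s' = cm s)).card

/-- Range: number of distinct sites visited. -/
def rangeRW {n N : ℕ} (s : Fin N → Fin n × Bool) : ℕ :=
  (Finset.univ.image (fun i : Fin (N + 1) => pos s (i : ℕ))).card

/-- Number of contact matrices realized by walks of length `N` on `ℤ^n`. -/
def W (n N : ℕ) : ℕ :=
  (Finset.univ.image (fun s : Fin N → Fin n × Bool => cm s)).card

noncomputable def gammaRW (n N : ℕ) : ℝ :=
  Real.log (W n N) / (N * Real.log (2 * n))

/-- Coarse-grained Shannon entropy of the contact-matrix partition, uniform measure. -/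
noncomputable def SC (n N : ℕ) : ℝ :=
  ∑ C : Fin (N + 1) → Fin (N + 1) → Bool,
    Real.negMulLog
      (((Finset.univ.filter (fun s : Fin N → Fin n × Bool => cm s = C)).card : ℝ) / (2 * n) ^ N)

noncomputable def deltaRW (n N : ℕ) : ℝ :=
  SC n N / (N * Real.log (2 * n))

/-- Expected range under the uniform measure. -/
noncomputable def ER (n N : ℕ) : ℝ :=
  (∑ s : Fin N → Fin n × Bool, (rangeRW s : ℝ)) / (2 * n) ^ N

/-- The support (set of visited sites) of the walk of length `N` encoded by `s`. -/
def support {n N : ℕ} (s : Fin N → Fin n × Bool) : Finset (Fin n → ℤ) :=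
  Finset.univ.image (fun i : Fin (N + 1) => pos s (i : ℕ))

/-- The pattern `Q` occurs at the center `ζ` in the support of the planar walk
`s`: `ζ` and `ζ + (-1,0)` are visited while `ζ + (1,0)`, `ζ + (0,-1)`,
`ζ + (0,1)` and `ζ + (-1,1)` are not. -/
def occursQ {N : ℕ} (s : Fin N → Fin 2 × Bool) (ζ : Fin 2 → ℤ) : Prop :=
  ζ ∈ support s ∧ ζ + ![-1, 0] ∈ support s ∧
    ζ + ![1, 0] ∉ support s ∧ ζ + ![0, -1] ∉ support s ∧
    ζ + ![0, 1] ∉ support s ∧ ζ + ![-1, 1] ∉ support s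


section PatternAux

/-- Basic facts about `pos`. -/
lemma pos_zero {n N : ℕ} (s : Fin N → Fin n × Bool) : pos s 0 = 0 := by
  simp [pos]

lemma pos_succ {n N : ℕ} (s : Fin N → Fin n × Bool) (i : ℕ) (hi : i < N) :
    pos s (i + 1) = pos s i + stepVec n (s ⟨i, hi⟩) := by
  have hins : Finset.univ.filter (fun k : Fin N => (k : ℕ) < i + 1)
      = insert ⟨i, hi⟩ (Finset.univ.filter (fun k : Fin N => (k : ℕ) < i)) := by
    ext k
    simp only [Finset.mem_filter, Finset.mem_univ, true_and, Finset.mem_insert, Fin.ext_iff]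
    omega
  rw [pos, hins, Finset.sum_insert (by simp), pos, add_comm]

lemma pos_mem_support {n N : ℕ} (s : Fin N → Fin n × Bool) {i : ℕ} (hi : i ≤ N) :
    pos s i ∈ support s :=
  Finset.mem_image.mpr ⟨⟨i, Nat.lt_succ_of_le hi⟩, Finset.mem_univ _, rfl⟩

lemma exists_of_mem_support {n N : ℕ} {s : Fin N → Fin n × Bool} {x : Fin n → ℤ}
    (hx : x ∈ support s) : ∃ i ≤ N, pos s i = x := by
  rcases Finset.mem_image.mp hx with ⟨i, -, h⟩
  exact ⟨i, Nat.lt_succ_iff.mp i.isLt, h⟩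

/-- The map shifting members of `A` by `(-1,1)`. -/
def fA (A : Finset (Fin 2 → ℤ)) (x : Fin 2 → ℤ) : Fin 2 → ℤ :=
  if x ∈ A then x + ![-1, 1] else x

/-- Normalized by the image of the origin. -/
def gA (A : Finset (Fin 2 → ℤ)) (x : Fin 2 → ℤ) : Fin 2 → ℤ :=
  fA A x - fA A 0

lemma gA_sub (A : Finset (Fin 2 → ℤ)) (x y : Fin 2 → ℤ) :
    gA A y - gA A x = fA A y - fA A x := by
  simp only [gA, sub_sub_sub_cancel_right]

/-- Decode a unit vector into a direction. -/
def dirOf (v : Fin 2 → ℤ) : Fin 2 × Bool :=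
  if v 0 = 1 then (0, true) else if v 0 = -1 then (0, false)
  else if v 1 = 1 then (1, true) else (1, false)

lemma dirOf_spec (d : Fin 2 × Bool) : stepVec 2 (dirOf (stepVec 2 d)) = stepVec 2 d := by
  rcases d with ⟨i, b⟩
  fin_cases i <;> cases b <;>
    · funext j
      fin_cases j <;> simp [dirOf, stepVec]

/-- The transformed walk. -/
def tw {N : ℕ} (s : Fin N → Fin 2 × Bool) (A : Finset (Fin 2 → ℤ)) :
    Fin N → Fin 2 × Bool :=
  fun k => dirOf (gA A (pos s ((k : ℕ) + 1)) - gA A (pos s (k : ℕ)))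

lemma sv_cases (d : Fin 2 × Bool) :
    stepVec 2 d = ![1, 0] ∨ stepVec 2 d = ![-1, 0] ∨
      stepVec 2 d = ![0, 1] ∨ stepVec 2 d = ![0, -1] := by
  rcases d with ⟨i, b⟩
  fin_cases i <;> cases b
  · exact Or.inr (Or.inl (by funext j; fin_cases j <;> simp [stepVec]))
  · exact Or.inl (by funext j; fin_cases j <;> simp [stepVec])
  · exact Or.inr (Or.inr (Or.inr (by funext j; fin_cases j <;> simp [stepVec])))
  · exact Or.inr (Or.inr (Or.inl (by funext j; fin_cases j <;> simp [stepVec])))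

lemma vec_eq1 (x : Fin 2 → ℤ) : x + ![-1, 0] + ![1, 0] = x := by
  funext j; fin_cases j <;> simp [Matrix.vecHead, Matrix.vecTail]

lemma vec_eq2 (x : Fin 2 → ℤ) : x + ![-1, 0] - (x + ![-1, 1]) = ![0, -1] := by
  funext j; fin_cases j <;> simp [Matrix.vecHead, Matrix.vecTail]

lemma vec_eq3 (x : Fin 2 → ℤ) : x + ![1, 0] + ![-1, 1] - x = ![0, 1] := by
  funext j; fin_cases j <;> simp [Matrix.vecHead, Matrix.vecTail]

lemma vec_eq4 (x : Fin 2 → ℤ) : x + ![0, 1] + ![0, -1] = x := by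
  funext j; fin_cases j <;> simp [Matrix.vecHead, Matrix.vecTail]

lemma vec_eq5 (x : Fin 2 → ℤ) : x + ![0, -1] + ![0, 1] = x := by
  funext j; fin_cases j <;> simp [Matrix.vecHead, Matrix.vecTail]

/-- Key geometric lemma: on the support, `fA` turns steps into steps. -/
lemma fA_step {N : ℕ} (s : Fin N → Fin 2 × Bool) (T A : Finset (Fin 2 → ℤ))
    (hA : A ⊆ T) (hocc : ∀ ζ ∈ T, occursQ s ζ)
    {x y : Fin 2 → ℤ} (hx : x ∈ support s) (hy : y ∈ support s)
    (d : Fin 2 × Bool) (hxy : y = x + stepVec 2 d) :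
    ∃ d', fA A y - fA A x = stepVec 2 d' := by
  by_cases hxA : x ∈ A
  · obtain ⟨hs1, hs2, hq1, hq2, hq3, hq4⟩ := hocc x (hA hxA)
    rcases sv_cases d with h | h | h | h <;> rw [h] at hxy
    · rw [hxy] at hy; exact absurd hy hq1
    · by_cases hyA : y ∈ A
      · obtain ⟨-, -, hyq1, -⟩ := hocc y (hA hyA)
        rw [hxy, vec_eq1 x] at hyq1
        exact absurd hx hyq1
      · refine ⟨(1, false), ?_⟩
        have hst : stepVec 2 ((1 : Fin 2), false) = ![0, -1] :=
          (sv_cases ((1 : Fin 2), false)).resolve_left (by intro h; have := congrFun h 1; simp [stepVec] at this)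
            |>.resolve_left (by intro h; have := congrFun h 0; simp [stepVec] at this)
            |>.resolve_left (by intro h; have := congrFun h 1; simp [stepVec] at this)
        rw [hst, fA, fA, if_pos hxA, if_neg hyA, hxy, vec_eq2]
    · rw [hxy] at hy; exact absurd hy hq3
    · rw [hxy] at hy; exact absurd hy hq2
  · by_cases hyA : y ∈ A
    · obtain ⟨-, -, hyq1, hyq2, hyq3, -⟩ := hocc y (hA hyA)
      rcases sv_cases d with h | h | h | h <;> rw [h] at hxy
      · refine ⟨(1, true), ?_⟩
        have hst : stepVec 2 ((1 : Fin 2), true) = ![0, 1] := by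
          funext j; fin_cases j <;> simp [stepVec]
        rw [hst, fA, fA, if_pos hyA, if_neg hxA, hxy, vec_eq3]
      · rw [hxy, vec_eq1 x] at hyq1
        exact absurd hx hyq1
      · rw [hxy] at hyq2
        rw [vec_eq4 x] at hyq2
        exact absurd hx hyq2
      · rw [hxy] at hyq3
        rw [vec_eq5 x] at hyq3
        exact absurd hx hyq3
    · exact ⟨d, by rw [fA, fA, if_neg hxA, if_neg hyA, hxy]; abel⟩

/-- Positions of the transformed walk. -/
lemma pos_tw {N : ℕ} (s : Fin N → Fin 2 × Bool) (T A : Finset (Fin 2 → ℤ))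
    (hA : A ⊆ T) (hocc : ∀ ζ ∈ T, occursQ s ζ) :
    ∀ i ≤ N, pos (tw s A) i = gA A (pos s i) := by
  intro i
  induction i with
  | zero =>
      intro _
      rw [pos_zero, pos_zero, gA, sub_self]
  | succ i ih =>
      intro h
      have hiN : i < N := h
      obtain ⟨d', hd'⟩ := fA_step s T A hA hocc (pos_mem_support s (le_of_lt hiN))
        (pos_mem_support s h) (s ⟨i, hiN⟩) (pos_succ s i hiN)
      have hg : gA A (pos s (i + 1)) - gA A (pos s i) = stepVec 2 d' := by
        rw [gA_sub]; exact hd'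
      rw [pos_succ (tw s A) i hiN, ih (le_of_lt hiN)]
      show gA A (pos s i) + stepVec 2 (dirOf (gA A (pos s (i + 1)) - gA A (pos s i))) = _
      rw [hg, dirOf_spec, ← hg]
      abel

/-- Injectivity of `fA` on the support. -/
lemma fA_inj {N : ℕ} (s : Fin N → Fin 2 × Bool) (T A : Finset (Fin 2 → ℤ))
    (hA : A ⊆ T) (hocc : ∀ ζ ∈ T, occursQ s ζ)
    {x y : Fin 2 → ℤ} (hx : x ∈ support s) (hy : y ∈ support s)
    (h : fA A x = fA A y) : x = y := by
  rw [fA, fA] at h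
  by_cases hxA : x ∈ A <;> by_cases hyA : y ∈ A
  · rw [if_pos hxA, if_pos hyA] at h
    exact add_right_cancel h
  · rw [if_pos hxA, if_neg hyA] at h
    obtain ⟨-, -, -, -, -, hq⟩ := hocc x (hA hxA)
    rw [h] at hq
    exact absurd hy hq
  · rw [if_neg hxA, if_pos hyA] at h
    obtain ⟨-, -, -, -, -, hq⟩ := hocc y (hA hyA)
    rw [← h] at hq
    exact absurd hx hq
  · rwa [if_neg hxA, if_neg hyA] at h

/-- The transformed walk has the same contact matrix. -/
lemma cm_tw {N : ℕ} (s : Fin N → Fin 2 × Bool) (T A : Finset (Fin 2 → ℤ))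
    (hA : A ⊆ T) (hocc : ∀ ζ ∈ T, occursQ s ζ) :
    cm (tw s A) = cm s := by
  funext i j
  have hi : (i : ℕ) ≤ N := Nat.lt_succ_iff.mp i.isLt
  have hj : (j : ℕ) ≤ N := Nat.lt_succ_iff.mp j.isLt
  rw [cm, cm, decide_eq_decide]
  rw [pos_tw s T A hA hocc _ hi, pos_tw s T A hA hocc _ hj]
  refine and_congr_right fun _ => ⟨fun h => ?_, fun h => by rw [h]⟩
  have h' : fA A (pos s (i : ℕ)) = fA A (pos s (j : ℕ)) :=
    sub_eq_zero.mp ((gA_sub A (pos s (j : ℕ)) (pos s (i : ℕ))).symm.trans (sub_eq_zero.mpr h))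
  exact fA_inj s T A hA hocc (pos_mem_support s hi) (pos_mem_support s hj) h'

lemma tw_ne {N : ℕ} (s : Fin N → Fin 2 × Bool) (T A B : Finset (Fin 2 → ℤ))
    (hA : A ⊆ T) (hB : B ⊆ T) (hocc : ∀ ζ ∈ T, occursQ s ζ)
    {ζ : Fin 2 → ℤ} (hζA : ζ ∈ A) (hζB : ζ ∉ B) : tw s A ≠ tw s B := by
  intro hEq
  obtain ⟨h1, h2, -, -, -, -⟩ := hocc ζ (hA hζA)
  obtain ⟨i, hi, hpi⟩ := exists_of_mem_support h1
  obtain ⟨j, hj, hpj⟩ := exists_of_mem_support h2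
  have e1 : gA A ζ = gA B ζ := by
    rw [← hpi, ← pos_tw s T A hA hocc i hi, ← pos_tw s T B hB hocc i hi, hEq]
  have e2 : gA A (ζ + ![-1, 0]) = gA B (ζ + ![-1, 0]) := by
    rw [← hpj, ← pos_tw s T A hA hocc j hj, ← pos_tw s T B hB hocc j hj, hEq]
  have hζ' : ζ + ![-1, 0] ∉ T := by
    intro hmem
    obtain ⟨-, -, hno, -⟩ := hocc _ hmem
    rw [vec_eq1 ζ] at hno
    exact absurd h1 hno
  have key : gA A ζ - gA A (ζ + ![-1, 0]) = gA B ζ - gA B (ζ + ![-1, 0]) := by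
    rw [e1, e2]
  have cA : gA A ζ - gA A (ζ + ![-1, 0]) = (ζ + ![-1, 1]) - (ζ + ![-1, 0]) := by
    rw [gA_sub]
    simp only [fA, if_pos hζA, if_neg (fun h => hζ' (hA h))]
  have cB : gA B ζ - gA B (ζ + ![-1, 0]) = ζ - (ζ + ![-1, 0]) := by
    rw [gA_sub]
    simp only [fA, if_neg hζB, if_neg (fun h => hζ' (hB h))]
  rw [cA, cB] at key
  have hc := congrFun key 1
  simp only [Pi.add_apply, Pi.sub_apply, Matrix.cons_val_one, Matrix.head_cons] at hc
  simp at hc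

end PatternAux

/-- If the support of a planar walk contains `M` occurrences of the pattern `Q`
at distinct (hence disjoint) centers, then at least `2^M` walks share its
contact matrix: `deg C(ω) ≥ 2^M`. -/
theorem deg_ge_two_pow_of_pattern_occurrences {N : ℕ}
    (s : Fin N → Fin 2 × Bool) (M : ℕ)
    (T : Finset (Fin 2 → ℤ)) (hT : T.card = M)
    (hocc : ∀ ζ ∈ T, occursQ s ζ) :
    2 ^ M ≤ degC s := by
  classical
  have hmaps : ∀ A ∈ T.powerset,
      tw s A ∈ Finset.univ.filter (fun s' : Fin N → Fin 2 × Bool => cm s' = cm s) := by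
    intro A hAp
    simp only [Finset.mem_filter, Finset.mem_univ, true_and]
    exact cm_tw s T A (Finset.mem_powerset.mp hAp) hocc
  have hinj : Set.InjOn (tw s) T.powerset := by
    intro A hAp B hBp hEq
    by_contra hne
    have hex : ∃ ζ, (ζ ∈ A ∧ ζ ∉ B) ∨ (ζ ∈ B ∧ ζ ∉ A) := by
      by_contra hc
      push_neg at hc
      exact hne (Finset.ext fun a => ⟨(hc a).1, (hc a).2⟩)
    obtain ⟨ζ, hζ | hζ⟩ := hex
    · exact tw_ne s T A B (Finset.mem_powerset.mp hAp) (Finset.mem_powerset.mp hBp)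
        hocc hζ.1 hζ.2 hEq
    · exact tw_ne s T B A (Finset.mem_powerset.mp hBp) (Finset.mem_powerset.mp hAp)
        hocc hζ.1 hζ.2 hEq.symm
  calc 2 ^ M = T.powerset.card := by rw [Finset.card_powerset, hT]
    _ ≤ _ := Finset.card_le_card_of_injOn (tw s) hmaps hinj
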